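/- For every prime p and every integer d ≥ 0, Z_p(d) ≤ (log_p(d+1) + 3)^d, where Z_p(d) = max_M r_p(M,d). -/

import Mathlib

/-- `r_p(M,d)`: the number of finitely supported nonincreasing sequences `m` of nonnegative
integers with `m 0 ≤ d` and `Σ m_i p^i = M`. -/
noncomputable def rp (p : ℤ) (M d : ℤ) : ℕ :=
  {m : ℕ →₀ ℤ | (∀ i, 0 ≤ m i) ∧ (∀ i, m (i + 1) ≤ m i) ∧ m 0 ≤ d ∧
    (m.sum fun i a => a * p ^ i) = M}.ncard

/-- `Z_p(d) = max_M r_p(M,d)`. -/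
noncomputable def Zp (p : ℤ) (d : ℤ) : ℕ :=
  sSup {n : ℕ | ∃ M : ℤ, rp p M d = n}

/-- A downward closed finset of naturals is an initial segment. -/
lemma dc_finset (s : Finset ℕ) (h : ∀ i j : ℕ, i ≤ j → j ∈ s → i ∈ s) :
    s = Finset.range s.card := by
  have hsub : s ⊆ Finset.range s.card := by
    intro x hx
    have hr : Finset.range (x + 1) ⊆ s := by
      intro y hy
      exact h y x (Nat.lt_succ_iff.mp (Finset.mem_range.mp hy)) hx
    have := Finset.card_le_card hr
    simp only [Finset.card_range] at this
    exact Finset.mem_range.mpr (by omega)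
  exact Finset.eq_of_subset_of_card_le hsub (by simp)

lemma card_fin_lt (d t : ℕ) (ht : t ≤ d) :
    (Finset.univ.filter fun v : Fin d => (v : ℕ) < t).card = t := by
  rw [show (Finset.univ.filter fun v : Fin d => (v:ℕ) < t)
      = (Finset.univ : Finset (Fin t)).map (Fin.castLEEmb ht) by
    ext v; simp [Fin.castLEEmb]; constructor
    · intro hv; exact ⟨⟨v, hv⟩, rfl⟩
    · rintro ⟨w, rfl⟩; simp [Fin.castLE]]
  simp

lemma int_le_aux (d : ℕ) (a b : ℤ) (hab : a ≤ d) (hb : 0 ≤ b)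
    (h : ∀ v : Fin d, (v : ℤ) + 1 ≤ a → (v : ℤ) + 1 ≤ b) : a ≤ b := by
  by_contra hc
  push_neg at hc
  have hd : b.toNat < d := by omega
  have := h ⟨b.toNat, hd⟩ (by simp; omega)
  simp at this

/-- Key counting bound: `r_p(M,d) ≤ (⌊log_p d⌋ + 1)^d`. -/
lemma rp_le (p : ℕ) (hp : 2 ≤ p) (d : ℕ) (M : ℤ) :
    rp p M d ≤ (Nat.log p d + 1) ^ d := by
  classical
  set L := Nat.log p d with hL
  set S : Set (ℕ →₀ ℤ) := {m : ℕ →₀ ℤ | (∀ i, 0 ≤ m i) ∧ (∀ i, m (i + 1) ≤ m i) ∧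
    m 0 ≤ (d : ℤ) ∧ (m.sum fun i a => a * (p : ℤ) ^ i) = M} with hS
  -- the conjugate tuple
  set c : (ℕ →₀ ℤ) → Fin d → ℕ :=
    fun m v => (m.support.filter fun i => (v : ℤ) + 1 ≤ m i).card with hc
  set Nv : (ℕ →₀ ℤ) → Fin d → ℕ :=
    fun m v => ∑ w ∈ Finset.univ.filter (fun w => v ≤ w), p ^ (c m w) with hNv
  set F : (ℕ →₀ ℤ) → (Fin d → Fin (L + 1)) :=
    fun m v => ⟨min (Nat.log p (Nv m v) - c m v) L, by omega⟩ with hF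
  -- facts about members of S
  have fact : ∀ m ∈ S, (∀ (v : Fin d) (i : ℕ), i < c m v ↔ (v : ℤ) + 1 ≤ m i) ∧
      ((∑ v : Fin d, ((p : ℤ)) ^ (c m v)) = ((p : ℤ) - 1) * M + d) ∧
      (∀ v : Fin d, c m v ≤ Nat.log p (Nv m v) ∧ Nat.log p (Nv m v) ≤ L + c m v) := by
    rintro m ⟨hpos, hmono, hm0, hsum⟩
    have hanti : ∀ j i : ℕ, i ≤ j → m j ≤ m i := by
      intro j
      induction j with
      | zero =>
        intro i hij
        have : i = 0 := Nat.le_zero.mp hij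
        subst this
        exact le_refl _
      | succ k ih =>
        intro i hij
        rcases Nat.lt_or_ge i (k+1) with h | h
        · exact le_trans (hmono k) (ih i (by omega))
        · have : i = k + 1 := by omega
          subst this
          exact le_refl _
    have hmd : ∀ i, m i ≤ (d : ℤ) := fun i => le_trans (hanti i 0 (Nat.zero_le i)) hm0
    -- support is an initial segment
    set K := m.support.card with hK
    have hsupp : m.support = Finset.range K := by
      apply dc_finset
      intro i j hij hj
      rw [Finsupp.mem_support_iff] at hj ⊢
      have h1 := hpos j
      have h2 := hanti j i hij
      omega
    have hfil : ∀ v : Fin d,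
        m.support.filter (fun i => (v : ℤ) + 1 ≤ m i) = Finset.range (c m v) := by
      intro v
      apply dc_finset
      intro i j hij hj
      simp only [Finset.mem_filter, Finsupp.mem_support_iff] at hj ⊢
      have h2 := hanti j i hij
      constructor <;> omega
    have hiff : ∀ (v : Fin d) (i : ℕ), i < c m v ↔ (v : ℤ) + 1 ≤ m i := by
      intro v i
      rw [← Finset.mem_range, ← hfil v]
      simp only [Finset.mem_filter, Finsupp.mem_support_iff]
      constructor
      · exact fun h => h.2
      · intro h
        refine ⟨?_, h⟩
        have : (0 : ℤ) ≤ (v : ℤ) := by positivity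
        intro h0; rw [h0] at h; omega
    have hcK : ∀ v : Fin d, c m v ≤ K := by
      intro v
      exact Finset.card_le_card (Finset.filter_subset _ _)
    -- the value formula
    have hmi : ∀ i : ℕ, m i = ((Finset.univ.filter fun v : Fin d => i < c m v).card : ℤ) := by
      intro i
      have h1 : (Finset.univ.filter fun v : Fin d => i < c m v)
          = (Finset.univ.filter fun v : Fin d => (v : ℕ) < (m i).toNat) := by
        apply Finset.filter_congr
        intro v _
        rw [hiff v i]
        constructor <;> intro h <;> omega
      rw [h1, card_fin_lt d (m i).toNat (by have := hmd i; have := hpos i; omega)]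
      have := hpos i; omega
    -- the sum identity
    have hsum2 : (∑ v : Fin d, ((p : ℤ)) ^ (c m v)) = ((p : ℤ) - 1) * M + d := by
      have key : ((p : ℤ) - 1) * M = ∑ v : Fin d, (((p : ℤ)) ^ (c m v) - 1) := by
        rw [← hsum, Finsupp.sum, hsupp, Finset.mul_sum]
        calc ∑ i ∈ Finset.range K, ((p : ℤ) - 1) * (m i * (p : ℤ) ^ i)
            = ∑ i ∈ Finset.range K, ∑ v : Fin d,
                (if i < c m v then ((p : ℤ) - 1) * (p : ℤ) ^ i else 0) := by
              apply Finset.sum_congr rfl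
              intro i _
              rw [← Finset.sum_filter, Finset.sum_const, hmi i, nsmul_eq_mul]
              push_cast
              ring
          _ = ∑ v : Fin d, ∑ i ∈ Finset.range K,
                (if i < c m v then ((p : ℤ) - 1) * (p : ℤ) ^ i else 0) := Finset.sum_comm
          _ = ∑ v : Fin d, (((p : ℤ)) ^ (c m v) - 1) := by
              apply Finset.sum_congr rfl
              intro v _
              rw [← Finset.sum_filter]
              have : (Finset.range K).filter (fun i => i < c m v) = Finset.range (c m v) := by
                ext i
                simp only [Finset.mem_filter, Finset.mem_range]
                have := hcK v
                omega
              rw [this, ← Finset.mul_sum, mul_comm, geom_sum_mul]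
      have : (∑ v : Fin d, (((p : ℤ)) ^ (c m v) - 1))
          = (∑ v : Fin d, ((p : ℤ)) ^ (c m v)) - d := by
        rw [Finset.sum_sub_distrib]
        simp
      rw [this] at key
      omega
    refine ⟨hiff, hsum2, ?_⟩
    -- log bounds
    intro v
    have hcanti : ∀ w : Fin d, v ≤ w → c m w ≤ c m v := by
      intro w hvw
      apply Finset.card_le_card
      intro i hi
      simp only [Finset.mem_filter] at hi ⊢
      have hvw' : (v : ℤ) ≤ (w : ℤ) := by exact_mod_cast hvw
      exact ⟨hi.1, by omega⟩
    have hterm : p ^ (c m v) ≤ Nv m v := by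
      apply Finset.single_le_sum (f := fun w => p ^ (c m w))
      · intro w _; positivity
      · simp
    have hNvpos : Nv m v ≠ 0 := by
      have : 0 < p ^ (c m v) := by positivity
      omega
    have hle : Nv m v ≤ d * p ^ (c m v) := by
      calc Nv m v ≤ ∑ w ∈ Finset.univ.filter (fun w => v ≤ w), p ^ (c m v) := by
            apply Finset.sum_le_sum
            intro w hw
            exact Nat.pow_le_pow_right (by omega) (hcanti w (Finset.mem_filter.mp hw).2)
        _ = (Finset.univ.filter (fun w : Fin d => v ≤ w)).card * p ^ (c m v) := by
            rw [Finset.sum_const]; ring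
        _ ≤ d * p ^ (c m v) := by
            apply Nat.mul_le_mul_right
            calc (Finset.univ.filter (fun w : Fin d => v ≤ w)).card
                ≤ (Finset.univ : Finset (Fin d)).card := Finset.card_le_card (Finset.filter_subset _ _)
              _ = d := by simp
    constructor
    · exact (Nat.le_log_iff_pow_le (by omega) hNvpos).mpr hterm
    · have hlt : Nv m v < p ^ (L + 1 + c m v) := by
        calc Nv m v ≤ d * p ^ (c m v) := hle
          _ < p ^ (L + 1) * p ^ (c m v) :=
              mul_lt_mul_of_pos_right (Nat.lt_pow_succ_log_self (by omega) d) (by positivity)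
          _ = p ^ (L + 1 + c m v) := by rw [← pow_add]
      have := Nat.log_lt_of_lt_pow hNvpos hlt
      omega
  -- partition identity
  have hpart : ∀ (m : ℕ →₀ ℤ) (v : Fin d),
      (∑ w ∈ Finset.univ.filter (fun w => w < v), p ^ (c m w)) + Nv m v
        = ∑ w : Fin d, p ^ (c m w) := by
    intro m v
    simp only [hNv]
    rw [show (Finset.univ.filter (fun w : Fin d => v ≤ w))
        = (Finset.univ.filter (fun w : Fin d => ¬ w < v)) from
      Finset.filter_congr (fun w _ => by simp [not_lt])]
    exact Finset.sum_filter_add_sum_filter_not _ _ _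
  -- injectivity
  have hinj : Set.InjOn F S := by
    intro m hm m' hm' hFe
    obtain ⟨hiff, hsum2, hlog⟩ := fact m hm
    obtain ⟨hiff', hsum2', hlog'⟩ := fact m' hm'
    have hNtot : (∑ w : Fin d, p ^ (c m w)) = ∑ w : Fin d, p ^ (c m' w) := by
      have : ((∑ w : Fin d, p ^ (c m w) : ℕ) : ℤ) = ((∑ w : Fin d, p ^ (c m' w) : ℕ) : ℤ) := by
        push_cast
        rw [hsum2, hsum2']
      exact_mod_cast this
    have hceq : ∀ (n : ℕ) (hn : n < d), c m ⟨n, hn⟩ = c m' ⟨n, hn⟩ := by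
      intro n
      induction n using Nat.strong_induction_on with
      | _ n ih =>
        intro hn
        set v : Fin d := ⟨n, hn⟩ with hv
        have hpre : (∑ w ∈ Finset.univ.filter (fun w => w < v), p ^ (c m w))
            = ∑ w ∈ Finset.univ.filter (fun w => w < v), p ^ (c m' w) := by
          apply Finset.sum_congr rfl
          intro w hw
          have hwv : (w : ℕ) < n := (Finset.mem_filter.mp hw).2
          have := ih (w : ℕ) hwv w.isLt
          simp only [Fin.eta] at this
          rw [this]
        have hNveq : Nv m v = Nv m' v := by
          have h1 := hpart m v
          have h2 := hpart m' v
          omega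
        have hFv := congrFun hFe v
        rw [hF] at hFv
        simp only [Fin.mk.injEq] at hFv
        have b1 := (hlog v).1
        have b2 := (hlog v).2
        have b3 := (hlog' v).1
        have b4 := (hlog' v).2
        rw [hNveq] at hFv b1 b2
        omega
    -- conclude m = m'
    ext i
    have h1 : ∀ v : Fin d, (v : ℤ) + 1 ≤ m i ↔ (v : ℤ) + 1 ≤ m' i := by
      intro v
      rw [← hiff v i, ← hiff' v i]
      have := hceq (v : ℕ) v.isLt
      simp only [Fin.eta] at this
      rw [this]
    obtain ⟨hpos, hmono, hm0, _⟩ := hm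
    obtain ⟨hpos', hmono', hm0', _⟩ := hm'
    have hanti : ∀ j : ℕ, m j ≤ m 0 := by
      intro j
      induction j with
      | zero => omega
      | succ k ih => exact le_trans (hmono k) ih
    have hanti' : ∀ j : ℕ, m' j ≤ m' 0 := by
      intro j
      induction j with
      | zero => omega
      | succ k ih => exact le_trans (hmono' k) ih
    have hd : m i ≤ (d : ℤ) := le_trans (hanti i) hm0
    have hd' : m' i ≤ (d : ℤ) := le_trans (hanti' i) hm0'
    have l1 : m i ≤ m' i := int_le_aux d _ _ hd (hpos' i) (fun v hv => (h1 v).mp hv)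
    have l2 : m' i ≤ m i := int_le_aux d _ _ hd' (hpos i) (fun v hv => (h1 v).mpr hv)
    omega
  -- conclude
  have h0 : rp p M d = S.ncard := rfl
  rw [h0]
  calc S.ncard = (F '' S).ncard := (Set.ncard_image_of_injOn hinj).symm
    _ ≤ (Set.univ : Set (Fin d → Fin (L + 1))).ncard :=
        Set.ncard_le_ncard (Set.subset_univ _) Set.finite_univ
    _ = (L + 1) ^ d := by
        rw [Set.ncard_univ, Nat.card_eq_fintype_card, Fintype.card_fun]
        simp

lemma Zp_le (p : ℕ) (hp : 2 ≤ p) (d : ℕ) :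
    Zp p d ≤ (Nat.log p d + 1) ^ d := by
  apply csSup_le
  · exact ⟨rp p 0 d, 0, rfl⟩
  · rintro n ⟨M, rfl⟩
    exact rp_le p hp d M

/-- `Z_p(d) ≤ (log_p(d+1) + 3)^d` for every `d ≥ 0`. -/
theorem stmt_7 (p : ℕ) (hp : p.Prime) (d : ℕ) :
    (Zp p d : ℝ) ≤ (Real.logb p (d + 1) + 3) ^ d := by
  have h2 : 2 ≤ p := hp.two_le
  have h1p : (1 : ℝ) < (p : ℝ) := by exact_mod_cast (by omega : 1 < p)
  have hbase : ((Nat.log p d + 1 : ℕ) : ℝ) ≤ Real.logb p (d + 1) + 3 := by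
    rcases Nat.eq_zero_or_pos d with hd0 | hd1
    · subst hd0
      have h0 : Real.logb p ((0:ℕ) + 1) = 0 := by norm_num
      rw [h0]
      norm_num
    · have hlog : ((Nat.log p d : ℕ) : ℝ) ≤ Real.logb p (d + 1) := by
        have hple : ((p : ℝ) ^ (Nat.log p d) : ℝ) ≤ (d : ℝ) + 1 := by
          have := Nat.pow_log_le_self p (by omega : d ≠ 0)
          have : ((p ^ Nat.log p d : ℕ) : ℝ) ≤ ((d : ℕ) : ℝ) := by exact_mod_cast this
          push_cast at this ⊢
          linarith
        calc ((Nat.log p d : ℕ) : ℝ) = Real.logb p ((p : ℝ) ^ (Nat.log p d)) := by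
              rw [Real.logb_pow, Real.logb_self_eq_one (by linarith)]
              ring
          _ ≤ Real.logb p ((d : ℝ) + 1) := by
              apply Real.logb_le_logb_of_le h1p (by positivity) hple
      push_cast at hlog ⊢
      linarith
  calc (Zp p d : ℝ) ≤ (((Nat.log p d + 1) ^ d : ℕ) : ℝ) := by
        exact_mod_cast Zp_le p h2 d
    _ = (((Nat.log p d + 1 : ℕ) : ℝ)) ^ d := by push_cast; ring
    _ ≤ (Real.logb p (d + 1) + 3) ^ d := by
        apply pow_le_pow_left₀ (by positivity) hbase
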